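/- Let L ∈ R^{n₁×r}, R ∈ R^{n₂×r}, and let Q, Q̄ ∈ GL(r) be invertible r×r matrices. Let Σ_star be an r×r positive diagonal matrix and suppose ‖(R·Q^{-T} − R_star)·Σ_star^{-1/2}‖_op < 1, where R_star = V_star·Σ_star^{1/2} with V_star having orthonormal columns, and R·Q^{-T} has full column rank. Then ‖Σ_star^{1/2}·Q̄^{-1}·Q·Σ_star^{1/2} − Σ_star‖_op ≤ ‖R·(Q̄^{-T} − Q^{-T})·Σ_star^{1/2}‖_op / (1 − ‖(R·Q^{-T} − R_star)·Σ_star^{-1/2}‖_op). -/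

import Mathlib

open Matrix

/-- The operator norm (largest singular value) of a matrix. -/
noncomputable def opNorm {n₁ n₂ : ℕ} (A : Matrix (Fin n₁) (Fin n₂) ℝ) : ℝ :=
  ‖LinearMap.toContinuousLinearMap (Matrix.toEuclideanLin A)‖

noncomputable def eCLM {m n : ℕ} (A : Matrix (Fin m) (Fin n) ℝ) :
    EuclideanSpace ℝ (Fin n) →L[ℝ] EuclideanSpace ℝ (Fin m) :=
  LinearMap.toContinuousLinearMap (Matrix.toEuclideanLin A)

lemma opNorm_eq {m n : ℕ} (A : Matrix (Fin m) (Fin n) ℝ) : opNorm A = ‖eCLM A‖ := rfl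

lemma eCLM_apply {m n : ℕ} (A : Matrix (Fin m) (Fin n) ℝ) (x : EuclideanSpace ℝ (Fin n)) :
    eCLM A x = (WithLp.equiv 2 (Fin m → ℝ)).symm (A *ᵥ (WithLp.equiv 2 (Fin n → ℝ)) x) := rfl

lemma eCLM_mul {m n k : ℕ} (A : Matrix (Fin m) (Fin n) ℝ) (B : Matrix (Fin n) (Fin k) ℝ) :
    eCLM (A * B) = (eCLM A).comp (eCLM B) := by
  ext x i
  simp [eCLM_apply, mulVec_mulVec]

lemma opNorm_mul_le {m n k : ℕ} (A : Matrix (Fin m) (Fin n) ℝ) (B : Matrix (Fin n) (Fin k) ℝ) :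
    opNorm (A * B) ≤ opNorm A * opNorm B := by
  rw [opNorm_eq, opNorm_eq, opNorm_eq, eCLM_mul]
  exact ContinuousLinearMap.opNorm_comp_le _ _

lemma inner_eCLM {m n : ℕ} (A : Matrix (Fin m) (Fin n) ℝ) (x : EuclideanSpace ℝ (Fin n))
    (y : EuclideanSpace ℝ (Fin m)) :
    inner (𝕜 := ℝ) (eCLM A x) y = inner (𝕜 := ℝ) x (eCLM Aᵀ y) := by
  simp only [eCLM_apply, PiLp.inner_apply, RCLike.inner_apply, conj_trivial]
  have : (A *ᵥ (WithLp.equiv 2 (Fin n → ℝ)) x) ⬝ᵥ (WithLp.equiv 2 (Fin m → ℝ)) y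
      = ((WithLp.equiv 2 (Fin n → ℝ)) x) ⬝ᵥ (Aᵀ *ᵥ (WithLp.equiv 2 (Fin m → ℝ)) y) := by
    rw [mulVec_transpose, dotProduct_comm, dotProduct_mulVec, dotProduct_comm]
  simpa [dotProduct, mul_comm] using this

lemma opNorm_nonneg {m n : ℕ} (A : Matrix (Fin m) (Fin n) ℝ) : 0 ≤ opNorm A :=
  norm_nonneg _

lemma opNorm_transpose_le {m n : ℕ} (A : Matrix (Fin m) (Fin n) ℝ) :
    opNorm Aᵀ ≤ opNorm A := by
  rw [opNorm_eq]
  apply ContinuousLinearMap.opNorm_le_bound _ (opNorm_nonneg A)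
  intro y
  rcases eq_or_lt_of_le (norm_nonneg (eCLM Aᵀ y)) with h0 | h0
  · rw [← h0]; exact mul_nonneg (opNorm_nonneg A) (norm_nonneg y)
  have h1 : ‖eCLM Aᵀ y‖ ^ 2 = inner (𝕜 := ℝ) (eCLM A (eCLM Aᵀ y)) y := by
    rw [inner_eCLM, real_inner_self_eq_norm_sq]
  have h2 : inner (𝕜 := ℝ) (eCLM A (eCLM Aᵀ y)) y ≤ opNorm A * ‖eCLM Aᵀ y‖ * ‖y‖ := by
    calc inner (𝕜 := ℝ) (eCLM A (eCLM Aᵀ y)) y ≤ ‖eCLM A (eCLM Aᵀ y)‖ * ‖y‖ :=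
          real_inner_le_norm _ _
    _ ≤ opNorm A * ‖eCLM Aᵀ y‖ * ‖y‖ := by
        have := (eCLM A).le_opNorm (eCLM Aᵀ y)
        exact mul_le_mul_of_nonneg_right this (norm_nonneg y)
  nlinarith [norm_nonneg (eCLM Aᵀ y)]

lemma opNorm_transpose {m n : ℕ} (A : Matrix (Fin m) (Fin n) ℝ) : opNorm Aᵀ = opNorm A :=
  le_antisymm (opNorm_transpose_le A)
    (by simpa using opNorm_transpose_le Aᵀ)

lemma eCLM_one {n : ℕ} (x : EuclideanSpace ℝ (Fin n)) :
    eCLM (1 : Matrix (Fin n) (Fin n) ℝ) x = x := by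
  ext i; simp [eCLM_apply]

lemma eCLM_add {m n : ℕ} (B C : Matrix (Fin m) (Fin n) ℝ) (x : EuclideanSpace ℝ (Fin n)) :
    eCLM (B + C) x = eCLM B x + eCLM C x := by
  ext i; simp [eCLM_apply, add_mulVec]

lemma norm_eCLM_sq {m n : ℕ} (A : Matrix (Fin m) (Fin n) ℝ) (x : EuclideanSpace ℝ (Fin n)) :
    ‖eCLM A x‖ ^ 2 = inner (𝕜 := ℝ) x (eCLM (Aᵀ * A) x) := by
  rw [eCLM_mul, ContinuousLinearMap.comp_apply, ← inner_eCLM, real_inner_self_eq_norm_sq]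

lemma eCLM_mulVec {m n : ℕ} (A : Matrix (Fin m) (Fin n) ℝ) (x : Fin n → ℝ) :
    (WithLp.equiv 2 (Fin m → ℝ)) (eCLM A ((WithLp.equiv 2 (Fin n → ℝ)).symm x)) = A *ᵥ x :=
  rfl

lemma isUnit_of_eCLM_inj {n : ℕ} (G : Matrix (Fin n) (Fin n) ℝ)
    (h : ∀ z : EuclideanSpace ℝ (Fin n), eCLM G z = 0 → z = 0) : IsUnit G := by
  rw [← Matrix.mulVec_injective_iff_isUnit]
  intro x y hxy
  have h5 : eCLM G ((WithLp.equiv 2 (Fin n → ℝ)).symm (x - y)) = 0 := by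
    apply (WithLp.equiv 2 (Fin n → ℝ)).injective
    rw [eCLM_mulVec, Matrix.mulVec_sub, hxy, sub_self]
    simp
  have h6 := h _ h5
  have h7 := congrArg (WithLp.equiv 2 (Fin n → ℝ)) h6
  simpa [sub_eq_zero] using h7

set_option maxHeartbeats 2000000 in
/-- Perturbation bound for alignment matrices:
`‖Σ^{1/2} Q̄⁻¹ Q Σ^{1/2} − Σ‖_op ≤ ‖R (Q̄^{-T} − Q^{-T}) Σ^{1/2}‖_op / (1 − ‖(R Q^{-T} − R_star) Σ^{-1/2}‖_op)`. -/
theorem alignment_perturbation_bound {n₂ r : ℕ}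
    (Vstar : Matrix (Fin n₂) (Fin r) ℝ) (σ : Fin r → ℝ)
    (hV : Vstarᵀ * Vstar = 1) (hσ : ∀ i, 0 < σ i)
    (Rstar : Matrix (Fin n₂) (Fin r) ℝ)
    (hRstar : Rstar = Vstar * Matrix.diagonal (fun i => Real.sqrt (σ i)))
    (R : Matrix (Fin n₂) (Fin r) ℝ)
    (Q Qbar : Matrix (Fin r) (Fin r) ℝ) (hQ : IsUnit Q) (hQbar : IsUnit Qbar)
    (hfull : (R * (Q⁻¹)ᵀ).rank = r)
    (hcontr : opNorm ((R * (Q⁻¹)ᵀ - Rstar) *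
      Matrix.diagonal (fun i => (Real.sqrt (σ i))⁻¹)) < 1) :
    opNorm (Matrix.diagonal (fun i => Real.sqrt (σ i)) * Qbar⁻¹ * Q *
        Matrix.diagonal (fun i => Real.sqrt (σ i)) - Matrix.diagonal σ) ≤
      opNorm (R * ((Qbar⁻¹)ᵀ - (Q⁻¹)ᵀ) * Matrix.diagonal (fun i => Real.sqrt (σ i))) /
        (1 - opNorm ((R * (Q⁻¹)ᵀ - Rstar) *
          Matrix.diagonal (fun i => (Real.sqrt (σ i))⁻¹))) := by
  set S : Matrix (Fin r) (Fin r) ℝ := Matrix.diagonal (fun i => Real.sqrt (σ i)) with hS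
  set Sinv : Matrix (Fin r) (Fin r) ℝ :=
    Matrix.diagonal (fun i => (Real.sqrt (σ i))⁻¹) with hSinv
  have hsp : ∀ i, 0 < Real.sqrt (σ i) := fun i => Real.sqrt_pos.2 (hσ i)
  have hSSinv : S * Sinv = 1 := by
    have h : (fun i => Real.sqrt (σ i) * (Real.sqrt (σ i))⁻¹) = fun _ => (1:ℝ) := by
      funext i; exact mul_inv_cancel₀ (ne_of_gt (hsp i))
    rw [hS, hSinv, Matrix.diagonal_mul_diagonal, h, Matrix.diagonal_one]
  have hSinvS : Sinv * S = 1 := by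
    have h : (fun i => (Real.sqrt (σ i))⁻¹ * Real.sqrt (σ i)) = fun _ => (1:ℝ) := by
      funext i; exact inv_mul_cancel₀ (ne_of_gt (hsp i))
    rw [hS, hSinv, Matrix.diagonal_mul_diagonal, h, Matrix.diagonal_one]
  have hSS : S * S = Matrix.diagonal σ := by
    have h : (fun i => Real.sqrt (σ i) * Real.sqrt (σ i)) = σ := by
      funext i; exact Real.mul_self_sqrt (le_of_lt (hσ i))
    rw [hS, Matrix.diagonal_mul_diagonal, h]
  have hQd : IsUnit Q.det := (Matrix.isUnit_iff_isUnit_det Q).1 hQ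
  have hQQi : Q * Q⁻¹ = 1 := Matrix.mul_nonsing_inv Q hQd
  have hQiQ : Q⁻¹ * Q = 1 := Matrix.nonsing_inv_mul Q hQd
  set A : Matrix (Fin n₂) (Fin r) ℝ := R * (Q⁻¹)ᵀ with hA
  set E : Matrix (Fin n₂) (Fin r) ℝ := (A - Rstar) * Sinv with hE
  set ε : ℝ := opNorm E with hε
  have hε1 : ε < 1 := hcontr
  have hε0 : 0 ≤ ε := opNorm_nonneg E
  set M : Matrix (Fin n₂) (Fin r) ℝ := A * Sinv with hM
  have hMVE : M = Vstar + E := by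
    rw [hM, hE, Matrix.sub_mul, hRstar, Matrix.mul_assoc Vstar S Sinv, hSSinv, Matrix.mul_one]
    abel
  -- isometry of Vstar
  have hViso : ∀ x : EuclideanSpace ℝ (Fin r), ‖eCLM Vstar x‖ = ‖x‖ := by
    intro x
    have h1 : ‖eCLM Vstar x‖ ^ 2 = ‖x‖ ^ 2 := by
      rw [norm_eCLM_sq, hV]
      rw [eCLM_one, real_inner_self_eq_norm_sq]
    exact (sq_eq_sq₀ (norm_nonneg _) (norm_nonneg _)).1 h1
  -- lower bound for M
  have hMlow : ∀ x : EuclideanSpace ℝ (Fin r), (1 - ε) * ‖x‖ ≤ ‖eCLM M x‖ := by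
    intro x
    have h1 : eCLM M x = eCLM Vstar x + eCLM E x := by rw [hMVE]; exact eCLM_add _ _ _
    have h2 : ‖eCLM E x‖ ≤ ε * ‖x‖ := (eCLM E).le_opNorm x
    have h3 : ‖eCLM Vstar x‖ - ‖eCLM E x‖ ≤ ‖eCLM M x‖ := by
      rw [h1]; exact sub_le_iff_le_add.2 (norm_le_add_norm_add _ _)
    rw [hViso x] at h3
    nlinarith
  set G : Matrix (Fin r) (Fin r) ℝ := Mᵀ * M with hG
  -- G is invertible
  have hGunit : IsUnit G := by
    apply isUnit_of_eCLM_inj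
    intro z hz
    have h1 : ‖eCLM M z‖ ^ 2 = inner (𝕜 := ℝ) z (eCLM G z) := norm_eCLM_sq M z
    rw [hz, inner_zero_right] at h1
    have h2 := hMlow z
    have h3 : ‖eCLM M z‖ = 0 := by nlinarith [norm_nonneg (eCLM M z)]
    rw [h3] at h2
    have h4 : ‖z‖ = 0 := by nlinarith [norm_nonneg z]
    exact norm_eq_zero.1 h4
  have hGd : IsUnit G.det := (Matrix.isUnit_iff_isUnit_det G).1 hGunit
  have hGGi : G * G⁻¹ = 1 := Matrix.mul_nonsing_inv G hGd
  set K : Matrix (Fin n₂) (Fin r) ℝ := M * G⁻¹ with hK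
  have h1e : (0:ℝ) < 1 - ε := by linarith
  have hKbound : opNorm K ≤ (1 - ε)⁻¹ := by
    rw [opNorm_eq]
    apply ContinuousLinearMap.opNorm_le_bound _ (le_of_lt (inv_pos.2 h1e))
    intro x
    set y : EuclideanSpace ℝ (Fin r) := eCLM G⁻¹ x with hy
    have hKx : eCLM K x = eCLM M y := by
      rw [hK, eCLM_mul, ContinuousLinearMap.comp_apply, hy]
    have hGy : eCLM G y = x := by
      rw [hy, ← ContinuousLinearMap.comp_apply, ← eCLM_mul, hGGi, eCLM_one]
    have h1 : ‖eCLM M y‖ ^ 2 = inner (𝕜 := ℝ) y (eCLM G y) := norm_eCLM_sq M y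
    rw [hGy] at h1
    have h2 : inner (𝕜 := ℝ) y x ≤ ‖y‖ * ‖x‖ := real_inner_le_norm y x
    have h3 := hMlow y
    rw [hKx]
    have h4 : (1 - ε) * ‖eCLM M y‖ ≤ ‖x‖ := by
      rcases eq_or_lt_of_le (norm_nonneg (eCLM M y)) with h0 | h0
      · rw [← h0, mul_zero]; exact norm_nonneg x
      · nlinarith [norm_nonneg x, norm_nonneg y]
    calc ‖eCLM M y‖ = (1 - ε)⁻¹ * ((1 - ε) * ‖eCLM M y‖) := by
          field_simp
      _ ≤ (1 - ε)⁻¹ * ‖x‖ :=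
          mul_le_mul_of_nonneg_left h4 (le_of_lt (inv_pos.2 h1e))
  set N : Matrix (Fin n₂) (Fin r) ℝ := R * ((Qbar⁻¹)ᵀ - (Q⁻¹)ᵀ) * S with hN
  have hSinvT : Sinvᵀ = Sinv := by rw [hSinv, Matrix.diagonal_transpose]
  have hST : Sᵀ = S := by rw [hS, Matrix.diagonal_transpose]
  have hRtK : Rᵀ * K = Q * S := by
    have hMT : Mᵀ = Sinv * Q⁻¹ * Rᵀ := by
      rw [hM, hA, Matrix.transpose_mul, Matrix.transpose_mul, Matrix.transpose_transpose,
        hSinvT, Matrix.mul_assoc]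
    have h1 : Q * S * G = Rᵀ * M := by
      rw [hG, hMT]
      simp only [Matrix.mul_assoc]
      rw [← Matrix.mul_assoc S Sinv, hSSinv, Matrix.one_mul,
        ← Matrix.mul_assoc Q Q⁻¹, hQQi, Matrix.one_mul]
    calc Rᵀ * K = Rᵀ * M * G⁻¹ := by rw [hK]; exact (Matrix.mul_assoc Rᵀ M G⁻¹).symm
      _ = Q * S * G * G⁻¹ := by rw [h1]
      _ = Q * S := by rw [Matrix.mul_assoc (Q * S) G G⁻¹, hGGi, Matrix.mul_one]
  have hTid : S * Qbar⁻¹ * Q * S - Matrix.diagonal σ = Nᵀ * K := by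
    have hNT : Nᵀ = S * (Qbar⁻¹ - Q⁻¹) * Rᵀ := by
      rw [hN, Matrix.transpose_mul, Matrix.transpose_mul, Matrix.transpose_sub,
        Matrix.transpose_transpose, Matrix.transpose_transpose, hST, Matrix.mul_assoc]
    have h2 : Nᵀ * K = S * (Qbar⁻¹ - Q⁻¹) * (Rᵀ * K) := by
      rw [hNT]; exact Matrix.mul_assoc (S * (Qbar⁻¹ - Q⁻¹)) Rᵀ K
    rw [h2, hRtK]
    have h3 : S * (Qbar⁻¹ - Q⁻¹) * (Q * S) =
        S * Qbar⁻¹ * Q * S - S * (Q⁻¹ * Q) * S := by noncomm_ring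
    rw [h3, hQiQ, Matrix.mul_one, hSS]
  rw [hTid]
  calc opNorm (Nᵀ * K) ≤ opNorm Nᵀ * opNorm K := opNorm_mul_le _ _
    _ ≤ opNorm N * (1 - ε)⁻¹ := by
        rw [opNorm_transpose]
        exact mul_le_mul_of_nonneg_left hKbound (opNorm_nonneg N)
    _ = opNorm N / (1 - ε) := by rw [div_eq_mul_inv]
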